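/- For u > 0 define ĥ(u) = 4(e^{−u} − 1 + u) − (e^{−2u} − 1 + 2u) and ρ̂(u) = (1 − e^{−u})² / √( (1 − e^{−2u}) ĥ(u) ). Then: (i) lim_{u → 0+} ρ̂(u) = √3/2; (ii) the function u ↦ ρ̂(u) √(1 + u/5) is monotone decreasing on (0, ∞); and (iii) lim_{u → ∞} ρ̂(u) √(1 + u/5) = 1/√10. -/

import Mathlib

open Filter

section CorrelationAux

lemma expx2 (u : ℝ) : Real.exp (-2*u) = Real.exp (-u)^2 := by
  rw [show (-2*u : ℝ) = (2:ℕ) * (-u) by push_cast; ring, Real.exp_nat_mul]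

lemma hasDerivAt_expneg (u : ℝ) : HasDerivAt (fun v : ℝ => Real.exp (-v)) (-Real.exp (-u)) u := by
  exact ((Real.hasDerivAt_exp (-u)).comp u (hasDerivAt_neg u)).congr_deriv (by ring)

lemma hasDerivAt_pqe (a b c k : ℝ) (u : ℝ) :
    HasDerivAt (fun u : ℝ => (a+b*u+c*u^2)*Real.exp (k*u))
      ((b+2*c*u+k*(a+b*u+c*u^2))*Real.exp (k*u)) u := by
  have h1 : HasDerivAt (fun u : ℝ => a+b*u+c*u^2) (b+2*c*u) u := by
    have hb : HasDerivAt (fun u : ℝ => b*u) b u := by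
      simpa using (hasDerivAt_id u).const_mul b
    have hc : HasDerivAt (fun u : ℝ => c*u^2) (c*(2*u)) u := by
      simpa using (hasDerivAt_pow 2 u).const_mul c
    have h := (hb.add hc).const_add a
    have heq : (fun u : ℝ => a+b*u+c*u^2) = fun x : ℝ => a + (b*x + c*x^2) := by
      funext x; ring
    rw [heq]
    exact h.congr_deriv (by ring)
  have h2 : HasDerivAt (fun u : ℝ => Real.exp (k*u)) (Real.exp (k*u)*k) u := by
    exact ((Real.hasDerivAt_exp (k*u)).comp u ((hasDerivAt_id u).const_mul k)).congr_deriv (by ring)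
  exact (h1.mul h2).congr_deriv (by ring)

lemma nonneg_of_deriv (F F' : ℝ → ℝ) (hd : ∀ u : ℝ, HasDerivAt F (F' u) u)
    (h0 : F 0 = 0) (h' : ∀ u : ℝ, 0 ≤ u → 0 ≤ F' u) : ∀ u : ℝ, 0 ≤ u → 0 ≤ F u := by
  intro u hu
  have mono : MonotoneOn F (Set.Ici 0) := by
    apply monotoneOn_of_deriv_nonneg (convex_Ici 0)
      (fun x _ => (hd x).continuousAt.continuousWithinAt)
      (fun x _ => (hd x).differentiableAt.differentiableWithinAt)
    intro x hx
    rw [(hd x).deriv]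
    exact h' x (le_of_lt (by simpa [interior_Ici] using hx))
  calc (0:ℝ) = F 0 := h0.symm
    _ ≤ F u := mono (by simp) (by simpa using hu) hu

lemma taylor4 (u : ℝ) (hu : 0 ≤ u) : 1+u+u^2/2+u^3/6 ≤ Real.exp u := by
  have h := Real.sum_le_exp_of_nonneg hu 4
  have he : ∑ i ∈ Finset.range 4, u ^ i / (i.factorial : ℝ) = 1+u+u^2/2+u^3/6 := by
    norm_num [Finset.sum_range_succ, Nat.factorial]
  rw [he] at h
  exact h

lemma g4_nonneg (u : ℝ) (hu : 0 ≤ u) :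
    0 ≤ 3328*Real.exp (4*u) + (-1404 + -4320*u + -648*u^2)*Real.exp (3*u)
      + (-1920 + -704*u + -64*u^2)*Real.exp (2*u) + 4*Real.exp u := by
  set t := Real.exp u with ht
  have htpos : 0 < t := Real.exp_pos u
  have ht0 : 1+u+u^2/2+u^3/6 ≤ t := taylor4 u hu
  have hK : 0 ≤ 3328*t^2 - (1404+4320*u+648*u^2)*t - (1920+704*u+64*u^2) := by
    nlinarith [sq_nonneg u, pow_nonneg hu 3, pow_nonneg hu 4, pow_nonneg hu 5, pow_nonneg hu 6,
      mul_nonneg hu hu, sq_nonneg (t - (1+u+u^2/2+u^3/6))]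
  have h4 : Real.exp (4*u) = Real.exp (2*u) * t^2 := by
    rw [ht, ← Real.exp_nat_mul, ← Real.exp_add]; norm_num; ring_nf
  have h3 : Real.exp (3*u) = Real.exp (2*u) * t := by
    rw [ht, ← Real.exp_add]; ring_nf
  have h2pos : 0 < Real.exp (2*u) := Real.exp_pos _
  calc (0:ℝ) ≤ Real.exp (2*u) * (3328*t^2 - (1404+4320*u+648*u^2)*t - (1920+704*u+64*u^2))
        + 4*Real.exp u := by positivity
    _ = 3328*Real.exp (4*u) + (-1404 + -4320*u + -648*u^2)*Real.exp (3*u)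
      + (-1920 + -704*u + -64*u^2)*Real.exp (2*u) + 4*Real.exp u := by
      rw [h4, h3]; ring

lemma hda_level (c4 a3 b3 c3 a2 b2 c2 d : ℝ) (u : ℝ) :
    HasDerivAt (fun u : ℝ => c4*Real.exp (4*u) + (a3+b3*u+c3*u^2)*Real.exp (3*u)
        + (a2+b2*u+c2*u^2)*Real.exp (2*u) + 4*Real.exp u + d)
      ((4*c4)*Real.exp (4*u) + ((b3+3*a3)+(2*c3+3*b3)*u+(3*c3)*u^2)*Real.exp (3*u)
        + ((b2+2*a2)+(2*c2+2*b2)*u+(2*c2)*u^2)*Real.exp (2*u) + 4*Real.exp u) u := by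
  have h4 := hasDerivAt_pqe c4 0 0 4 u
  have h3 := hasDerivAt_pqe a3 b3 c3 3 u
  have h2 := hasDerivAt_pqe a2 b2 c2 2 u
  have h1 : HasDerivAt (fun u : ℝ => 4*Real.exp u) (4*Real.exp u) u := by
    simpa using (Real.hasDerivAt_exp u).const_mul 4
  have hsum := (((h4.add h3).add h2).add h1).add_const d
  have heq : (fun u : ℝ => c4*Real.exp (4*u) + (a3+b3*u+c3*u^2)*Real.exp (3*u)
        + (a2+b2*u+c2*u^2)*Real.exp (2*u) + 4*Real.exp u + d)
      = fun u : ℝ => (c4+0*u+0*u^2)*Real.exp (4*u) + (a3+b3*u+c3*u^2)*Real.exp (3*u)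
        + (a2+b2*u+c2*u^2)*Real.exp (2*u) + 4*Real.exp u + d := by funext x; ring
  rw [heq]
  exact hsum.congr_deriv (by ring)

lemma G_nonneg (u : ℝ) (hu : 0 ≤ u) :
    0 ≤ 13*Real.exp (4*u) + (36 + -32*u + -8*u^2)*Real.exp (3*u)
      + (-52 + -28*u + -4*u^2)*Real.exp (2*u) + 4*Real.exp u + -1 := by
  have h3 : ∀ v : ℝ, 0 ≤ v → 0 ≤ 832*Real.exp (4*v) + (-36 + -1296*v + -216*v^2)*Real.exp (3*v)
      + (-800 + -320*v + -32*v^2)*Real.exp (2*v) + 4*Real.exp v + 0 := by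
    apply nonneg_of_deriv _ (fun v => 3328*Real.exp (4*v) + (-1404 + -4320*v + -648*v^2)*Real.exp (3*v)
      + (-1920 + -704*v + -64*v^2)*Real.exp (2*v) + 4*Real.exp v)
    · intro v
      exact (hda_level 832 (-36) (-1296) (-216) (-800) (-320) (-32) 0 v).congr_deriv (by ring)
    · norm_num
    · exact g4_nonneg
  have h2 : ∀ v : ℝ, 0 ≤ v → 0 ≤ 208*Real.exp (4*v) + (116 + -384*v + -72*v^2)*Real.exp (3*v)
      + (-328 + -144*v + -16*v^2)*Real.exp (2*v) + 4*Real.exp v + 0 := by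
    apply nonneg_of_deriv _ (fun v => 832*Real.exp (4*v) + (-36 + -1296*v + -216*v^2)*Real.exp (3*v)
      + (-800 + -320*v + -32*v^2)*Real.exp (2*v) + 4*Real.exp v + 0)
    · intro v
      exact (hda_level 208 116 (-384) (-72) (-328) (-144) (-16) 0 v).congr_deriv (by ring)
    · norm_num
    · exact h3
  have h1 : ∀ v : ℝ, 0 ≤ v → 0 ≤ 52*Real.exp (4*v) + (76 + -112*v + -24*v^2)*Real.exp (3*v)
      + (-132 + -64*v + -8*v^2)*Real.exp (2*v) + 4*Real.exp v + 0 := by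
    apply nonneg_of_deriv _ (fun v => 208*Real.exp (4*v) + (116 + -384*v + -72*v^2)*Real.exp (3*v)
      + (-328 + -144*v + -16*v^2)*Real.exp (2*v) + 4*Real.exp v + 0)
    · intro v
      exact (hda_level 52 76 (-112) (-24) (-132) (-64) (-8) 0 v).congr_deriv (by ring)
    · norm_num
    · exact h2
  have h0 : ∀ v : ℝ, 0 ≤ v → 0 ≤ 13*Real.exp (4*v) + (36 + -32*v + -8*v^2)*Real.exp (3*v)
      + (-52 + -28*v + -4*v^2)*Real.exp (2*v) + 4*Real.exp v + -1 := by
    apply nonneg_of_deriv _ (fun v => 52*Real.exp (4*v) + (76 + -112*v + -24*v^2)*Real.exp (3*v)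
      + (-132 + -64*v + -8*v^2)*Real.exp (2*v) + 4*Real.exp v + 0)
    · intro v
      exact (hda_level 13 36 (-32) (-8) (-52) (-28) (-4) (-1) v).congr_deriv (by ring)
    · norm_num
    · exact h1
  exact h0 u hu

lemma F_nonneg (u : ℝ) (hu : 0 ≤ u) :
    0 ≤ 13 + (36 + -32*u + -8*u^2)*Real.exp (-u) + (-52 + -28*u + -4*u^2)*Real.exp (-u)^2
      + 4*Real.exp (-u)^3 + -(Real.exp (-u)^4) := by
  have hG := G_nonneg u hu
  have key : (13 + (36 + -32*u + -8*u^2)*Real.exp (-u) + (-52 + -28*u + -4*u^2)*Real.exp (-u)^2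
      + 4*Real.exp (-u)^3 + -(Real.exp (-u)^4)) * Real.exp u ^ 4
      = 13*Real.exp (4*u) + (36 + -32*u + -8*u^2)*Real.exp (3*u)
      + (-52 + -28*u + -4*u^2)*Real.exp (2*u) + 4*Real.exp u + -1 := by
    have e2 : Real.exp (2*u) = Real.exp u ^ 2 := by
      rw [show (2*u : ℝ) = (2:ℕ)*u by push_cast; ring, Real.exp_nat_mul]
    have e3 : Real.exp (3*u) = Real.exp u ^ 3 := by
      rw [show (3*u : ℝ) = (3:ℕ)*u by push_cast; ring, Real.exp_nat_mul]
    have e4 : Real.exp (4*u) = Real.exp u ^ 4 := by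
      rw [show (4*u : ℝ) = (4:ℕ)*u by push_cast; ring, Real.exp_nat_mul]
    have ex : Real.exp (-u) = (Real.exp u)⁻¹ := Real.exp_neg u
    rw [e2, e3, e4, ex]
    have hne : Real.exp u ≠ 0 := (Real.exp_pos u).ne'
    field_simp
  rw [← key] at hG
  exact (mul_nonneg_iff_of_pos_right (by positivity)).mp hG

noncomputable def fAux (u : ℝ) : ℝ :=
  (1-Real.exp (-u))^4*(1+u/5)/((1-Real.exp (-u)^2)*(2*u-3+4*Real.exp (-u)-Real.exp (-u)^2))

lemma H_pos (u : ℝ) (hu : 0 < u) : 0 < 2*u-3+4*Real.exp (-u)-Real.exp (-u)^2 := by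
  have hd : ∀ v : ℝ, HasDerivAt (fun w : ℝ => 2*w-3+4*Real.exp (-w)-Real.exp (-w)^2)
      (2 - 4*Real.exp (-v) + 2*Real.exp (-v)^2) v := by
    intro v
    have hx := hasDerivAt_expneg v
    have h1 : HasDerivAt (fun w : ℝ => 2*w-3) 2 v := by
      simpa using ((hasDerivAt_id v).const_mul 2).sub_const 3
    have h2 : HasDerivAt (fun w : ℝ => 4*Real.exp (-w)) (4*(-Real.exp (-v))) v := hx.const_mul 4
    have h3 : HasDerivAt (fun w : ℝ => Real.exp (-w)^2)
        ((2:ℕ)*Real.exp (-v)^1*(-Real.exp (-v))) v := hx.pow 2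
    exact ((h1.add h2).sub h3).congr_deriv (by push_cast; ring)
  have mono : StrictMonoOn (fun w : ℝ => 2*w-3+4*Real.exp (-w)-Real.exp (-w)^2) (Set.Ici 0) := by
    apply strictMonoOn_of_deriv_pos (convex_Ici 0)
      (fun v _ => (hd v).continuousAt.continuousWithinAt)
    intro v hv
    rw [interior_Ici] at hv
    rw [(hd v).deriv]
    have hx1 : Real.exp (-v) < 1 := Real.exp_lt_one_iff.mpr (by linarith [Set.mem_Ioi.mp hv])
    nlinarith [sq_nonneg (1 - Real.exp (-v)), Real.exp_pos (-v)]
  have h0 : (fun w : ℝ => 2*w-3+4*Real.exp (-w)-Real.exp (-w)^2) 0 = 0 := by norm_num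
  have := mono (Set.self_mem_Ici) (Set.mem_Ici.mpr hu.le) hu
  rw [h0] at this
  exact this

lemma fAux_hasDeriv (u : ℝ) (hu : 0 < u) :
    ∃ d : ℝ, HasDerivAt fAux d u ∧ d ≤ 0 := by
  set x := Real.exp (-u) with hxdef
  have hxpos : 0 < x := Real.exp_pos _
  have hx1 : x < 1 := Real.exp_lt_one_iff.mpr (by linarith)
  have hH := H_pos u hu
  have hDne : (1-x^2)*(2*u-3+4*x-x^2) ≠ 0 := by
    have h1 : 0 < 1-x^2 := by nlinarith
    have h2 : 0 < 2*u-3+4*x-x^2 := hH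
    positivity
  have hx := hasDerivAt_expneg u
  have h1mx : HasDerivAt (fun w : ℝ => 1-Real.exp (-w)) x u := by
    exact (hx.const_sub 1).congr_deriv (by rw [hxdef]; ring)
  have hN : HasDerivAt (fun w : ℝ => (1-Real.exp (-w))^4*(1+w/5))
      (4*(1-x)^3*x*(1+u/5) + (1-x)^4*(1/5)) u := by
    have hp := h1mx.pow 4
    have hl : HasDerivAt (fun w : ℝ => 1+w/5) (1/5) u := by
      simpa using ((hasDerivAt_id u).div_const 5).const_add 1
    exact (hp.mul hl).congr_deriv (by simp only [Pi.pow_apply]; rw [← hxdef]; push_cast; ring)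
  have hD : HasDerivAt (fun w : ℝ => (1-Real.exp (-w)^2)*(2*w-3+4*Real.exp (-w)-Real.exp (-w)^2))
      (2*x^2*(2*u-3+4*x-x^2) + (1-x^2)*(2-4*x+2*x^2)) u := by
    have hsq : HasDerivAt (fun w : ℝ => Real.exp (-w)^2) ((2:ℕ)*Real.exp (-u)^1*(-Real.exp (-u))) u :=
      hx.pow 2
    have h1mx2 : HasDerivAt (fun w : ℝ => 1-Real.exp (-w)^2) (2*x^2) u := by
      exact ((hasDerivAt_const u (1:ℝ)).sub hsq).congr_deriv (by push_cast; ring)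
    have hHd : HasDerivAt (fun w : ℝ => 2*w-3+4*Real.exp (-w)-Real.exp (-w)^2)
        (2-4*x+2*x^2) u := by
      have h1 : HasDerivAt (fun w : ℝ => 2*w-3) 2 u := by
        simpa using ((hasDerivAt_id u).const_mul 2).sub_const 3
      have h2 := hx.const_mul 4
      exact ((h1.add h2).sub hsq).congr_deriv (by push_cast; ring)
    exact (h1mx2.mul hHd).congr_deriv (by ring)
  have hdiv := hN.div hD hDne
  refine ⟨_, hdiv, ?_⟩
  apply div_nonpos_of_nonpos_of_nonneg _ (by positivity)
  have key : (4*(1-x)^3*x*(1+u/5) + (1-x)^4*(1/5)) * ((1-x^2)*(2*u-3+4*x-x^2))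
      - (1-x)^4*(1+u/5) * (2*x^2*(2*u-3+4*x-x^2) + (1-x^2)*(2-4*x+2*x^2))
      = -(1/5)*(1-x)^4*(13 + (36 + -32*u + -8*u^2)*x + (-52 + -28*u + -4*u^2)*x^2
        + 4*x^3 + -(x^4)) := by ring
  rw [key]
  have hF := F_nonneg u hu.le
  rw [← hxdef] at hF
  nlinarith [pow_nonneg (by linarith : (0:ℝ) ≤ 1-x) 4, hF]

lemma fAux_antitone : AntitoneOn fAux (Set.Ioi 0) := by
  apply antitoneOn_of_deriv_nonpos (convex_Ioi 0)
  · intro v hv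
    obtain ⟨d, hd, _⟩ := fAux_hasDeriv v hv
    exact hd.continuousAt.continuousWithinAt
  · intro v hv
    rw [interior_Ioi] at hv
    obtain ⟨d, hd, _⟩ := fAux_hasDeriv v hv
    exact hd.differentiableAt.differentiableWithinAt
  · intro v hv
    rw [interior_Ioi] at hv
    obtain ⟨d, hd, hd0⟩ := fAux_hasDeriv v hv
    rw [hd.deriv]
    exact hd0

lemma cube_lim : Tendsto (fun t : ℝ => (Real.exp t - 1 - t - t^2/2)/t^3)
    (nhdsWithin 0 {(0:ℝ)}ᶜ) (nhds (1/6)) := by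
  have hsq : Tendsto (fun t : ℝ => (Real.exp t - 1 - t - t^2/2)/t^3 - 1/6)
      (nhdsWithin 0 {(0:ℝ)}ᶜ) (nhds 0) := by
    apply squeeze_zero_norm' (a := fun t : ℝ => 5/96*|t|)
    · have h1 : ∀ᶠ t : ℝ in nhdsWithin 0 {(0:ℝ)}ᶜ, |t| ≤ 1 := by
        apply eventually_nhdsWithin_of_eventually_nhds
        filter_upwards [Metric.ball_mem_nhds (0:ℝ) one_pos] with t ht
        rw [Metric.mem_ball, Real.dist_eq, sub_zero] at ht
        exact ht.le
      have h2 : ∀ᶠ t : ℝ in nhdsWithin 0 {(0:ℝ)}ᶜ, t ≠ 0 := by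
        filter_upwards [eventually_mem_nhdsWithin] with t ht
        simpa using ht
      filter_upwards [h1, h2] with t ht1 ht2
      have hb := Real.exp_bound (x := t) ht1 (n := 4) (by norm_num)
      have hsum : ∑ m ∈ Finset.range 4, t ^ m / (m.factorial : ℝ) = 1+t+t^2/2+t^3/6 := by
        norm_num [Finset.sum_range_succ, Nat.factorial]
      rw [hsum] at hb
      have hbnd : |Real.exp t - (1+t+t^2/2+t^3/6)| ≤ |t|^4 * (5/96) := by
        convert hb using 2
        norm_num [Nat.factorial]
      have heq : (Real.exp t - 1 - t - t^2/2)/t^3 - 1/6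
          = (Real.exp t - (1+t+t^2/2+t^3/6))/t^3 := by
        field_simp
        ring
      rw [Real.norm_eq_abs, heq, abs_div, abs_pow]
      have ht3 : (0:ℝ) < |t|^3 := by positivity
      rw [div_le_iff₀ ht3]
      calc |Real.exp t - (1+t+t^2/2+t^3/6)| ≤ |t|^4 * (5/96) := hbnd
        _ = 5/96*|t| * |t|^3 := by ring
    · have : Tendsto (fun t : ℝ => 5/96*|t|) (nhds 0) (nhds (5/96*|(0:ℝ)|)) :=
        (continuous_const.mul continuous_abs).tendsto 0
      simpa using this.mono_left nhdsWithin_le_nhds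
  have := hsq.add_const (1/6)
  simpa using this

lemma neg_map_Ioi : Tendsto (fun u : ℝ => -u) (nhdsWithin 0 (Set.Ioi 0))
    (nhdsWithin 0 {(0:ℝ)}ᶜ) := by
  apply tendsto_nhdsWithin_of_tendsto_nhds_of_eventually_within
  · simpa using (continuous_neg.tendsto (0:ℝ)).mono_left nhdsWithin_le_nhds
  · filter_upwards [eventually_mem_nhdsWithin] with t ht
    simp only [Set.mem_compl_iff, Set.mem_singleton_iff]
    have : (0:ℝ) < t := ht
    intro hc
    linarith [neg_eq_zero.mp hc]

lemma neg2_map_Ioi : Tendsto (fun u : ℝ => -2*u) (nhdsWithin 0 (Set.Ioi 0))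
    (nhdsWithin 0 {(0:ℝ)}ᶜ) := by
  apply tendsto_nhdsWithin_of_tendsto_nhds_of_eventually_within
  · have : Tendsto (fun u : ℝ => -2*u) (nhds 0) (nhds ((-2)*0)) :=
      (continuous_const.mul continuous_id).tendsto 0
    simpa using this.mono_left nhdsWithin_le_nhds
  · filter_upwards [eventually_mem_nhdsWithin] with t ht
    simp only [Set.mem_compl_iff, Set.mem_singleton_iff]
    have : (0:ℝ) < t := ht
    intro hc
    nlinarith

lemma h_cube_lim (h : ℝ → ℝ)
    (hh : ∀ u : ℝ, h u = 4 * (Real.exp (-u) - 1 + u) - (Real.exp (-2 * u) - 1 + 2 * u)) :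
    Tendsto (fun u : ℝ => h u / u^3) (nhdsWithin 0 (Set.Ioi 0)) (nhds (2/3)) := by
  have l1 := cube_lim.comp neg_map_Ioi
  have l2 := cube_lim.comp neg2_map_Ioi
  have comb := (l1.const_mul (-4)).add (l2.const_mul 8)
  have : (-4)*(1/6 : ℝ) + 8*(1/6) = 2/3 := by norm_num
  rw [this] at comb
  apply comb.congr'
  filter_upwards [eventually_mem_nhdsWithin] with u hu
  have hu0 : u ≠ 0 := ne_of_gt hu
  simp only [Function.comp]
  have e1 : (-u)^3 = -(u^3) := by ring
  have e2 : (-2*u)^3 = -(8*u^3) := by ring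
  rw [hh u, e1, e2, div_neg, div_neg]
  field_simp
  ring

lemma slope_lim : Tendsto (fun u : ℝ => (1-Real.exp (-u))/u) (nhdsWithin 0 {(0:ℝ)}ᶜ) (nhds 1) := by
  have hd : HasDerivAt (fun w : ℝ => -Real.exp (-w)) 1 0 := by
    exact (hasDerivAt_expneg 0).neg.congr_deriv (by simp)
  have ht := hasDerivAt_iff_tendsto_slope.mp hd
  apply ht.congr
  intro u
  simp [slope_def_field]
  ring

end CorrelationAux

/-- The three claims about the asymptotic position–velocity correlation `ρ̂`
stated before inequality (3.32): `ρ̂(u) → √3/2` as `u → 0⁺`,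
`u ↦ ρ̂(u)√(1+u/5)` is monotone decreasing on `(0,∞)`, and
`ρ̂(u)√(1+u/5) → 1/√10` as `u → ∞`. -/
theorem correlation_asymptotics
    (h ρ : ℝ → ℝ)
    (hh : ∀ u : ℝ, h u =
      4 * (Real.exp (-u) - 1 + u) - (Real.exp (-2 * u) - 1 + 2 * u))
    (hρ : ∀ u : ℝ, ρ u =
      (1 - Real.exp (-u)) ^ 2 / Real.sqrt ((1 - Real.exp (-2 * u)) * h u)) :
    Tendsto ρ (nhdsWithin 0 (Set.Ioi 0)) (nhds (Real.sqrt 3 / 2)) ∧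
    AntitoneOn (fun u : ℝ => ρ u * Real.sqrt (1 + u / 5)) (Set.Ioi 0) ∧
    Tendsto (fun u : ℝ => ρ u * Real.sqrt (1 + u / 5)) atTop
      (nhds (1 / Real.sqrt 10)) := by
  have hH2 : ∀ u : ℝ, h u = 2*u-3+4*Real.exp (-u)-Real.exp (-u)^2 := by
    intro u
    rw [hh u, expx2]
    ring
  have key : ∀ u ∈ Set.Ioi (0:ℝ), ρ u * Real.sqrt (1+u/5) = Real.sqrt (fAux u) := by
    intro u hu
    have hu0 : (0:ℝ) < u := hu
    have hxpos : 0 < Real.exp (-u) := Real.exp_pos _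
    have hxlt : Real.exp (-u) < 1 := Real.exp_lt_one_iff.mpr (by linarith)
    have hHpos := H_pos u hu0
    have hx2pos : 0 < 1 - Real.exp (-u)^2 := by nlinarith
    have e : Real.sqrt ((1-Real.exp (-u))^4) = (1-Real.exp (-u))^2 := by
      rw [show (1-Real.exp (-u))^4 = ((1-Real.exp (-u))^2)^2 by ring,
        Real.sqrt_sq (by positivity)]
    have harg : (0:ℝ) ≤ (1-Real.exp (-u))^4
        / ((1-Real.exp (-u)^2)*(2*u-3+4*Real.exp (-u)-Real.exp (-u)^2)) := by positivity
    rw [hρ u, hH2 u, expx2 u, ← e,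
      ← Real.sqrt_div (by positivity) ((1-Real.exp (-u)^2)*(2*u-3+4*Real.exp (-u)-Real.exp (-u)^2)),
      ← Real.sqrt_mul harg]
    congr 1
    unfold fAux
    ring
  refine ⟨?_, ?_, ?_⟩
  · -- limit √3/2 at 0+
    have hslope : Tendsto (fun u : ℝ => (1-Real.exp (-u))/u) (nhdsWithin 0 (Set.Ioi 0)) (nhds 1) :=
      slope_lim.mono_left (nhdsWithin_mono 0 (fun x hx => ne_of_gt hx))
    have hx1 : Tendsto (fun u : ℝ => Real.exp (-u)) (nhdsWithin 0 (Set.Ioi 0)) (nhds 1) := by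
      have : Tendsto (fun u : ℝ => Real.exp (-u)) (nhds 0) (nhds (Real.exp (-0))) :=
        (Real.continuous_exp.comp continuous_neg).tendsto 0
      simpa using this.mono_left nhdsWithin_le_nhds
    have hden : Tendsto (fun u : ℝ => (1+Real.exp (-u)) * (h u/u^3)) (nhdsWithin 0 (Set.Ioi 0))
        (nhds ((1+1)*(2/3))) :=
      (tendsto_const_nhds.add hx1).mul (h_cube_lim h hh)
    have hinner : Tendsto (fun u : ℝ => ((1-Real.exp (-u))/u)^3 / ((1+Real.exp (-u)) * (h u/u^3)))
        (nhdsWithin 0 (Set.Ioi 0)) (nhds (1^3/((1+1)*(2/3)))) :=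
      (hslope.pow 3).div hden (by norm_num)
    have hsqrt := (Real.continuous_sqrt.tendsto _).comp hinner
    have hs4 : Real.sqrt 4 = 2 := by
      rw [show (4:ℝ) = 2^2 by norm_num, Real.sqrt_sq (by norm_num : (0:ℝ) ≤ 2)]
    have hval : Real.sqrt ((1:ℝ)^3/((1+1)*(2/3))) = Real.sqrt 3 / 2 := by
      rw [show (1:ℝ)^3/((1+1)*(2/3)) = 3/4 by norm_num,
        Real.sqrt_div (by norm_num : (0:ℝ) ≤ 3) 4, hs4]
    rw [hval] at hsqrt
    apply hsqrt.congr'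
    filter_upwards [eventually_mem_nhdsWithin] with u hu
    have hu0 : (0:ℝ) < u := hu
    have hxpos : 0 < Real.exp (-u) := Real.exp_pos _
    have hxlt : Real.exp (-u) < 1 := Real.exp_lt_one_iff.mpr (by linarith)
    have hHpos := H_pos u hu0
    have hx2pos : 0 < 1 - Real.exp (-u)^2 := by nlinarith
    have e : Real.sqrt ((1-Real.exp (-u))^4) = (1-Real.exp (-u))^2 := by
      rw [show (1-Real.exp (-u))^4 = ((1-Real.exp (-u))^2)^2 by ring,
        Real.sqrt_sq (by positivity)]
    simp only [Function.comp]
    rw [hρ u, hH2 u, expx2 u, ← e,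
      ← Real.sqrt_div (by positivity) ((1-Real.exp (-u)^2)*(2*u-3+4*Real.exp (-u)-Real.exp (-u)^2))]
    congr 1
    field_simp
    ring
  · -- antitone
    intro a ha b hb hab
    simp only
    rw [key a ha, key b hb]
    exact Real.sqrt_le_sqrt (fAux_antitone ha hb hab)
  · -- limit 1/√10 at ∞
    have hxlim : Tendsto (fun u : ℝ => Real.exp (-u)) atTop (nhds 0) :=
      Real.tendsto_exp_neg_atTop_nhds_zero
    have hinv : Tendsto (fun u : ℝ => 1/u) atTop (nhds 0) := by
      simpa [one_div] using tendsto_inv_atTop_zero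
    have hW : Tendsto (fun u : ℝ => (1-Real.exp (-u))^4 * (1/u + 1/5)
        / ((2 - 3*(1/u) + 4*(Real.exp (-u)*(1/u)) - Real.exp (-u)^2*(1/u)) * (1 - Real.exp (-u)^2)))
        atTop (nhds (((1-0)^4 * (0+1/5))
        / ((2 - 3*0 + 4*(0*0) - 0^2*0) * (1-0^2)))) := by
      apply Tendsto.div
      · exact ((tendsto_const_nhds.sub hxlim).pow 4).mul (hinv.add tendsto_const_nhds)
      · apply Tendsto.mul
        · exact ((tendsto_const_nhds.sub (hinv.const_mul 3)).add
            ((hxlim.mul hinv).const_mul 4)).sub ((hxlim.pow 2).mul hinv)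
        · exact tendsto_const_nhds.sub (hxlim.pow 2)
      · norm_num
    have hW' : Tendsto (fun u : ℝ => (1-Real.exp (-u))^4 * (1/u + 1/5)
        / ((2 - 3*(1/u) + 4*(Real.exp (-u)*(1/u)) - Real.exp (-u)^2*(1/u)) * (1 - Real.exp (-u)^2)))
        atTop (nhds (1/10)) := by
      convert hW using 2
      norm_num
    have hfa : Tendsto fAux atTop (nhds (1/10)) := by
      apply hW'.congr'
      filter_upwards [eventually_gt_atTop 0] with u hu
      have hu0 : u ≠ 0 := ne_of_gt hu
      have hxpos : 0 < Real.exp (-u) := Real.exp_pos _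
      have hxlt : Real.exp (-u) < 1 := Real.exp_lt_one_iff.mpr (by linarith)
      have hHpos := H_pos u hu
      have hx2pos : 0 < 1 - Real.exp (-u)^2 := by nlinarith
      unfold fAux
      field_simp [hu0, ne_of_gt hHpos, ne_of_gt hx2pos]
    have hsqrt := (Real.continuous_sqrt.tendsto _).comp hfa
    have hval : Real.sqrt (1/10 : ℝ) = 1/Real.sqrt 10 := by
      rw [one_div, one_div, Real.sqrt_inv]
    rw [hval] at hsqrt
    apply hsqrt.congr'
    filter_upwards [eventually_gt_atTop 0] with u hu
    simp only [Function.comp]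
    exact (key u hu).symm
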